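/- For a Banach lattice E, every super weakly precompact subset of E is a limited set if and only if every disjoint weakly null sequence in E is limited, and this holds if and only if every weak*-null sequence in E′ is an almost L-sequence. -/

import Mathlib

open Filter Topology ZeroAtInfty Set Bornology

noncomputable section

section Defs

variable {E F X : Type*}

/-- Two elements of a lattice group are (lattice) disjoint. -/
def LatDisjoint [Lattice E] [AddCommGroup E] (x y : E) : Prop := |x| ⊓ |y| = 0

/-- A pairwise disjoint sequence. -/
def DisjointSeq [Lattice E] [AddCommGroup E] (x : ℕ → E) : Prop :=
  ∀ m n, m ≠ n → LatDisjoint (x m) (x n)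

variable [NormedAddCommGroup X] [NormedSpace ℝ X]

/-- A weakly null sequence in a normed space. -/
def WeaklyNull (x : ℕ → X) : Prop :=
  ∀ f : X →L[ℝ] ℝ, Tendsto (fun n => f (x n)) atTop (𝓝 0)

/-- A weakly Cauchy sequence. -/
def WeaklyCauchy (x : ℕ → X) : Prop :=
  ∀ f : X →L[ℝ] ℝ, ∃ l : ℝ, Tendsto (fun n => f (x n)) atTop (𝓝 l)

/-- A weakly precompact set: every sequence has a weakly Cauchy subsequence. -/
def WeaklyPrecompactSet (A : Set X) : Prop :=
  ∀ x : ℕ → X, (∀ n, x n ∈ A) → ∃ φ : ℕ → ℕ, StrictMono φ ∧ WeaklyCauchy (x ∘ φ)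

/-- A relatively weakly compact set: closure in the weak topology is compact. -/
def RelWeaklyCompact (A : Set X) : Prop :=
  IsCompact (closure ((toWeakSpace ℝ X) '' A))

/-- A weakly sequentially complete space. -/
def WeaklySeqComplete (X : Type*) [NormedAddCommGroup X] [NormedSpace ℝ X] : Prop :=
  ∀ x : ℕ → X, WeaklyCauchy x → ∃ l : X, ∀ f : X →L[ℝ] ℝ,
    Tendsto (fun n => f (x n)) atTop (𝓝 (f l))

/-- A weak*-null sequence of functionals. -/
def WeakStarNull (f : ℕ → X →L[ℝ] ℝ) : Prop :=
  ∀ x : X, Tendsto (fun n => f n x) atTop (𝓝 0)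

/-- A sequence of functionals converges uniformly to zero on a set `A`. -/
def UnifZeroOn (f : ℕ → X →L[ℝ] ℝ) (A : Set X) : Prop :=
  ∀ ε > (0:ℝ), ∃ N : ℕ, ∀ n ≥ N, ∀ x ∈ A, |f n x| < ε

/-- A limited set. -/
def LimitedSet (A : Set X) : Prop :=
  IsBounded A ∧ ∀ f : ℕ → X →L[ℝ] ℝ, WeakStarNull f → UnifZeroOn f A

variable [NormedAddCommGroup E] [Lattice E] [IsOrderedAddMonoid E] [HasSolidNorm E] [NormedSpace ℝ E]
  [NormedAddCommGroup F] [Lattice F] [IsOrderedAddMonoid F] [HasSolidNorm F] [NormedSpace ℝ F]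

/-- An almost Dunford–Pettis operator: sends disjoint weakly null sequences to norm null ones. -/
def AlmostDP (T : E →L[ℝ] X) : Prop :=
  ∀ x : ℕ → E, DisjointSeq x → WeaklyNull x → Tendsto (fun n => ‖T (x n)‖) atTop (𝓝 0)

/-- A Dunford–Pettis operator: sends weakly null sequences to norm null ones. -/
def DunfordPettisOp (T : E →L[ℝ] X) : Prop :=
  ∀ x : ℕ → E, WeaklyNull x → Tendsto (fun n => ‖T (x n)‖) atTop (𝓝 0)

/-- An almost L-set in the dual: disjoint weakly null sequences of `E` converge to zero
uniformly on `B`. -/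
def AlmostLSet (B : Set (E →L[ℝ] ℝ)) : Prop :=
  IsBounded B ∧ ∀ x : ℕ → E, DisjointSeq x → WeaklyNull x →
    ∀ ε > (0:ℝ), ∃ N : ℕ, ∀ n ≥ N, ∀ f ∈ B, |f (x n)| < ε

/-- An almost L-sequence in the dual. -/
def AlmostLSeq (f : ℕ → E →L[ℝ] ℝ) : Prop := AlmostLSet (Set.range f)

/-- A super weakly precompact set: a bounded set mapped to a relatively compact subset of `c₀`
by every almost Dunford–Pettis operator. -/
def SuperWeaklyPrecompact (A : Set E) : Prop :=
  IsBounded A ∧ ∀ T : E →L[ℝ] C₀(ℕ, ℝ), AlmostDP T → IsCompact (closure (T '' A))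

/-- The solid hull of a set in a Banach lattice. -/
def SolidHull (A : Set E) : Set E := {y | ∃ x ∈ A, |y| ≤ |x|}

/-- An L-weakly compact set. -/
def LWeaklyCompact (A : Set E) : Prop :=
  IsBounded A ∧ ∀ x : ℕ → E, (∀ n, x n ∈ SolidHull A) → DisjointSeq x →
    Tendsto (fun n => ‖x n‖) atTop (𝓝 0)

/-- A disjointly weakly compact set. -/
def DisjointlyWeaklyCompact (A : Set E) : Prop :=
  IsBounded A ∧ ∀ x : ℕ → E, (∀ n, x n ∈ SolidHull A) → DisjointSeq x → WeaklyNull x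

/-- The positive Schur property. -/
def PositiveSchur (E : Type*) [NormedAddCommGroup E] [Lattice E] [IsOrderedAddMonoid E] [HasSolidNorm E] [NormedSpace ℝ E] : Prop :=
  ∀ x : ℕ → E, DisjointSeq x → WeaklyNull x → Tendsto (fun n => ‖x n‖) atTop (𝓝 0)

/-- `|f|(|x|)`, via the Riesz–Kantorovich formula `|f|(|x|) = sup {f y : |y| ≤ |x|}`. -/
def pabs (f : E →L[ℝ] ℝ) (x : E) : ℝ := sSup ((fun y => f y) '' {y : E | |y| ≤ |x|})

/-- Totally bounded for the absolute weak topology `|σ|(E,E')` generated by the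
seminorms `x ↦ |f|(|x|)`. -/
def AWTotallyBounded (A : Set E) : Prop :=
  ∀ ε > (0:ℝ), ∀ s : Finset (E →L[ℝ] ℝ), ∃ Φ : Finset E, ↑Φ ⊆ A ∧
    ∀ x ∈ A, ∃ y ∈ Φ, ∀ f ∈ s, pabs f (x - y) < ε

/-- Pointwise order on the dual: `f ≤ g` iff `f x ≤ g x` for all `x ≥ 0`. -/
def dualLe (f g : E →L[ℝ] ℝ) : Prop := ∀ x : E, 0 ≤ x → f x ≤ g x

/-- Order bounded operator: maps order intervals into order intervals. -/
def OrderBoundedOp (T : E →L[ℝ] F) : Prop :=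
  ∀ a b : E, ∃ c d : F, T '' Set.Icc a b ⊆ Set.Icc c d

/-- PL-compact operator: the image of the closed unit ball is `|σ|(F,F')`-totally bounded. -/
def PLCompact (T : E →L[ℝ] F) : Prop :=
  AWTotallyBounded (T '' Metric.closedBall 0 1)

/-- AMAL-compact operator: the image of every order interval is `|σ|(F,F')`-totally bounded. -/
def AMALCompact (T : E →L[ℝ] F) : Prop :=
  ∀ x : E, 0 ≤ x → AWTotallyBounded (T '' Set.Icc (-x) x)

/-- The dual norm is order continuous: `‖f_α‖ → 0` for every decreasing net `f_α ↓ 0`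
of positive functionals. -/
def DualOrderContinuousNorm (E : Type*) [NormedAddCommGroup E] [Lattice E] [IsOrderedAddMonoid E] [HasSolidNorm E] [NormedSpace ℝ E] : Prop :=
  ∀ (ι : Type) (_ : Preorder ι) (_ : Nonempty ι),
    (∀ i j : ι, ∃ k, i ≤ k ∧ j ≤ k) → ∀ f : ι → E →L[ℝ] ℝ,
    (∀ i j, i ≤ j → dualLe (f j) (f i)) →
    (∀ i, dualLe 0 (f i)) →
    (∀ g, (∀ i, dualLe g (f i)) → dualLe g 0) →
    Tendsto (fun i => ‖f i‖) atTop (𝓝 0)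

/-- An atom of the dual lattice: a positive nonzero functional such that any two disjoint
positive functionals below it cannot both be nonzero. -/
def DualAtom (a : E →L[ℝ] ℝ) : Prop :=
  dualLe 0 a ∧ a ≠ 0 ∧
  ∀ b c : E →L[ℝ] ℝ, dualLe 0 b → dualLe b a → dualLe 0 c → dualLe c a →
    (∀ x : E, 0 ≤ x → ∀ ε > (0:ℝ), ∃ y : E, 0 ≤ y ∧ y ≤ x ∧ b y + c (x - y) < ε) →
    b = 0 ∨ c = 0

/-- `|f|` is disjoint from the positive functional `a`, i.e. `(|f| ⊓ a)(x) = 0` for `x ≥ 0`. -/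
def dualAbsDisjoint (f a : E →L[ℝ] ℝ) : Prop :=
  ∀ x : E, 0 ≤ x → ∀ ε > (0:ℝ), ∃ y : E, 0 ≤ y ∧ y ≤ x ∧ pabs f y + a (x - y) < ε

/-- The dual Banach lattice is discrete: the band generated by its atoms is everything,
i.e. the disjoint complement of the set of atoms is trivial. -/
def DualDiscrete (E : Type*) [NormedAddCommGroup E] [Lattice E] [IsOrderedAddMonoid E] [HasSolidNorm E] [NormedSpace ℝ E] : Prop :=
  ∀ f : E →L[ℝ] ℝ, (∀ a : E →L[ℝ] ℝ, DualAtom a → dualAbsDisjoint f a) → f = 0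

/-- The absolute weak* topology `|σ|(E',E)` on the dual, generated by the
seminorms `f ↦ |f|(|x|)`. -/
def awStarTop (E : Type*) [NormedAddCommGroup E] [Lattice E] [IsOrderedAddMonoid E] [HasSolidNorm E] [NormedSpace ℝ E] :
    TopologicalSpace (E →L[ℝ] ℝ) :=
  ⨅ x : E, TopologicalSpace.induced (fun f => pabs f x) inferInstance

end Defs

section Aux

variable {E : Type*} [NormedAddCommGroup E] [Lattice E] [IsOrderedAddMonoid E] [HasSolidNorm E] [NormedSpace ℝ E]

private lemma tendsto_abs_bdd {u : ℕ → ℝ} (h : Tendsto u atTop (𝓝 0)) :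
    ∃ C, ∀ n, |u n| ≤ C := by
  have habs : Tendsto (fun n => |u n|) atTop (𝓝 0) := by
    simpa using h.abs
  obtain ⟨C, hC⟩ := habs.bddAbove_range
  exact ⟨C, fun n => hC ⟨n, rfl⟩⟩

private lemma weakStarNull_bdd [CompleteSpace E] {f : ℕ → E →L[ℝ] ℝ} (hf : WeakStarNull f) :
    ∃ C, ∀ n, ‖f n‖ ≤ C :=
  banach_steinhaus fun x => by
    obtain ⟨C, hC⟩ := tendsto_abs_bdd (hf x)
    exact ⟨C, fun n => by simpa [Real.norm_eq_abs] using hC n⟩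

private lemma weaklyNull_bdd {x : ℕ → E} (hx : WeaklyNull x) :
    ∃ C, ∀ n, ‖x n‖ ≤ C := by
  obtain ⟨C, hC⟩ := banach_steinhaus
    (g := fun n => NormedSpace.inclusionInDoubleDual ℝ E (x n)) (fun φ => by
      obtain ⟨C, hC⟩ := tendsto_abs_bdd (hx φ)
      exact ⟨C, fun n => by simpa [Real.norm_eq_abs] using hC n⟩)
  refine ⟨C, fun n => ?_⟩
  have := (NormedSpace.inclusionInDoubleDualLi ℝ (E := E)).norm_map (x n)
  rw [← this]
  exact hC n

private lemma swap_unif {ε : ℝ} (hε : 0 < ε) {u : ℕ → ℕ → ℝ}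
    (h1 : ∃ N, ∀ m ≥ N, ∀ n, |u m n| < ε)
    (h2 : ∀ m, Tendsto (fun n => u m n) atTop (𝓝 0)) :
    ∃ N, ∀ n ≥ N, ∀ m, |u m n| < ε := by
  obtain ⟨N₁, hN₁⟩ := h1
  have h3 : ∀ᶠ n in atTop, ∀ m ∈ Set.Iio N₁, |u m n| < ε := by
    rw [eventually_all_finite (Set.finite_Iio N₁)]
    intro m _
    have := NormedAddCommGroup.tendsto_nhds_zero.mp (h2 m) ε hε
    simpa [Real.norm_eq_abs] using this
  obtain ⟨N₂, hN₂⟩ := eventually_atTop.mp h3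
  exact ⟨N₂, fun n hn m =>
    (lt_or_ge m N₁).elim (fun h => hN₂ n hn m h) (fun h => hN₁ m h n)⟩

end Aux

theorem stmt5 {E : Type*} [NormedAddCommGroup E] [Lattice E] [IsOrderedAddMonoid E] [HasSolidNorm E] [NormedSpace ℝ E] [CompleteSpace E] :
    ((∀ A : Set E, SuperWeaklyPrecompact A → LimitedSet A) ↔
      (∀ x : ℕ → E, DisjointSeq x → WeaklyNull x → LimitedSet (Set.range x))) ∧
    ((∀ x : ℕ → E, DisjointSeq x → WeaklyNull x → LimitedSet (Set.range x)) ↔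
      (∀ f : ℕ → E →L[ℝ] ℝ, WeakStarNull f → AlmostLSeq f)) := by
  have eq2_fwd : (∀ x : ℕ → E, DisjointSeq x → WeaklyNull x → LimitedSet (Set.range x)) →
      (∀ f : ℕ → E →L[ℝ] ℝ, WeakStarNull f → AlmostLSeq f) := by
    intro h f hf
    obtain ⟨C, hC⟩ := weakStarNull_bdd hf
    refine ⟨isBounded_iff_forall_norm_le.mpr ⟨C, ?_⟩, ?_⟩
    · rintro g ⟨m, rfl⟩; exact hC m
    · intro x hd hw ε hε
      obtain ⟨N, hN⟩ := swap_unif hε (u := fun m n => f m (x n))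
        (by obtain ⟨N, hN⟩ := (h x hd hw).2 f hf ε hε
            exact ⟨N, fun m hm n => hN m hm (x n) ⟨n, rfl⟩⟩)
        (fun m => hw (f m))
      exact ⟨N, fun n hn g hg => by obtain ⟨m, rfl⟩ := hg; exact hN n hn m⟩
  have eq2_bwd : (∀ f : ℕ → E →L[ℝ] ℝ, WeakStarNull f → AlmostLSeq f) →
      (∀ x : ℕ → E, DisjointSeq x → WeaklyNull x → LimitedSet (Set.range x)) := by
    intro h x hd hw
    obtain ⟨C, hC⟩ := weaklyNull_bdd hw
    refine ⟨isBounded_iff_forall_norm_le.mpr ⟨C, ?_⟩, ?_⟩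
    · rintro y ⟨n, rfl⟩; exact hC n
    · intro f hf ε hε
      obtain ⟨N, hN⟩ := swap_unif hε (u := fun n m => f m (x n))
        (by obtain ⟨N, hN⟩ := (h f hf).2 x hd hw ε hε
            exact ⟨N, fun n hn m => hN n hn (f m) ⟨m, rfl⟩⟩)
        (fun n => hf (x n))
      exact ⟨N, fun m hm y hy => by obtain ⟨n, rfl⟩ := hy; exact hN m hm n⟩
  have eq1_fwd : (∀ A : Set E, SuperWeaklyPrecompact A → LimitedSet A) →
      (∀ x : ℕ → E, DisjointSeq x → WeaklyNull x → LimitedSet (Set.range x)) := by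
    intro h x hd hw
    refine h _ ⟨?_, ?_⟩
    · obtain ⟨C, hC⟩ := weaklyNull_bdd hw
      exact isBounded_iff_forall_norm_le.mpr ⟨C, by rintro y ⟨n, rfl⟩; exact hC n⟩
    · intro T hT
      have h0 : Tendsto (fun n => T (x n)) atTop (𝓝 0) :=
        tendsto_zero_iff_norm_tendsto_zero.mpr (hT x hd hw)
      have hcomp := h0.isCompact_insert_range
      have him : T '' Set.range x = Set.range fun n => T (x n) := by
        rw [← Set.range_comp]; rfl
      refine hcomp.of_isClosed_subset isClosed_closure ?_
      rw [him]
      exact closure_minimal (Set.subset_insert _ _) hcomp.isClosed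
  have eq1_bwd : (∀ x : ℕ → E, DisjointSeq x → WeaklyNull x → LimitedSet (Set.range x)) →
      (∀ A : Set E, SuperWeaklyPrecompact A → LimitedSet A) := by
    intro h A hA
    refine ⟨hA.1, ?_⟩
    intro f hf ε hε
    obtain ⟨M, hM⟩ := weakStarNull_bdd hf
    have hM0 : (0:ℝ) ≤ M := le_trans (norm_nonneg _) (hM 0)
    let Tfun : E → C₀(ℕ, ℝ) := fun v =>
      ⟨⟨fun n => f n v, continuous_of_discreteTopology⟩, by
        rw [cocompact_eq_atTop]; exact hf v⟩
    have hTfun : ∀ v n, Tfun v n = f n v := fun v n => rfl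
    let Tlin : E →ₗ[ℝ] C₀(ℕ, ℝ) :=
      { toFun := Tfun
        map_add' := fun a b => by ext n; simp [hTfun]
        map_smul' := fun c a => by ext n; simp [hTfun] }
    have hbound : ∀ v : E, ‖Tlin v‖ ≤ M * ‖v‖ := by
      intro v
      rw [← ZeroAtInftyContinuousMap.norm_toBCF_eq_norm]
      refine (BoundedContinuousFunction.norm_le (mul_nonneg hM0 (norm_nonneg v))).mpr ?_
      intro n
      show ‖f n v‖ ≤ M * ‖v‖
      exact ((f n).le_opNorm v).trans (mul_le_mul_of_nonneg_right (hM n) (norm_nonneg v))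
    let T : E →L[ℝ] C₀(ℕ, ℝ) := Tlin.mkContinuous M hbound
    have hTapp : ∀ (v : E) (n : ℕ), T v n = f n v := fun v n => rfl
    have hADP : AlmostDP T := by
      intro y hdy hwy
      rw [Metric.tendsto_atTop]
      intro δ hδ
      obtain ⟨N, hN⟩ := swap_unif (half_pos hδ) (u := fun m n => f m (y n))
        (by obtain ⟨N, hN⟩ := (h y hdy hwy).2 f hf (δ/2) (half_pos hδ)
            exact ⟨N, fun m hm n => hN m hm (y n) ⟨n, rfl⟩⟩)
        (fun m => hwy (f m))
      refine ⟨N, fun n hn => ?_⟩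
      rw [Real.dist_eq, sub_zero, abs_of_nonneg (norm_nonneg _)]
      have hle : ‖T (y n)‖ ≤ δ/2 := by
        rw [← ZeroAtInftyContinuousMap.norm_toBCF_eq_norm]
        refine (BoundedContinuousFunction.norm_le (le_of_lt (half_pos hδ))).mpr ?_
        intro m
        show ‖f m (y n)‖ ≤ δ/2
        rw [Real.norm_eq_abs]
        exact (hN n hn m).le
      linarith
    have hcomp := hA.2 T hADP
    have htb : TotallyBounded (T '' A) := hcomp.totallyBounded.subset subset_closure
    obtain ⟨t, htfin, hsub⟩ := Metric.totallyBounded_iff.mp htb (ε/2) (half_pos hε)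
    have hev : ∀ᶠ n in atTop, ∀ c ∈ t, |c n| < ε/2 := by
      rw [eventually_all_finite htfin]
      intro c _
      have hc : Tendsto (fun n => c n) atTop (𝓝 0) := by
        have := zero_at_infty c
        rwa [cocompact_eq_atTop] at this
      have := NormedAddCommGroup.tendsto_nhds_zero.mp hc (ε/2) (half_pos hε)
      simpa [Real.norm_eq_abs] using this
    obtain ⟨N, hN⟩ := eventually_atTop.mp hev
    refine ⟨N, fun n hn v hv => ?_⟩
    obtain ⟨c, hct, hcd⟩ := Set.mem_iUnion₂.mp (hsub ⟨v, hv, rfl⟩)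
    have hdist : dist (T v) c < ε/2 := Metric.mem_ball.mp hcd
    have h1 : |f n v - c n| ≤ dist (T v) c := by
      have h1' := BoundedContinuousFunction.dist_coe_le_dist
        (f := (T v).toBCF) (g := c.toBCF) n
      rw [ZeroAtInftyContinuousMap.dist_toBCF_eq_dist] at h1'
      have : dist ((T v).toBCF n) (c.toBCF n) = |f n v - c n| := by
        rw [Real.dist_eq]; rfl
      rwa [this] at h1'
    have h2 := hN n hn c hct
    have h3 : |f n v| ≤ |f n v - c n| + |c n| := by
      have := abs_add_le (f n v - c n) (c n)
      rwa [sub_add_cancel] at this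
    linarith
  exact ⟨⟨eq1_fwd, eq1_bwd⟩, ⟨eq2_fwd, eq2_bwd⟩⟩

end
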